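/- If (X, F) is a well-graded family and D ⊆ X is shattered by F, then every element a ∈ D appears as the label of at least 2^{|D|−1} edges of the one-inclusion graph G_F, where the label of an edge between A and A ∪ {b} is b. -/

import Mathlib

/-- The one-inclusion graph of a set system. -/
def oneInclusion {α : Type*} [DecidableEq α] (F : Finset (Finset α)) :
    SimpleGraph {A : Finset α // A ∈ F} where
  Adj A B := (symmDiff A.1 B.1).card = 1
  symm := by
    constructor
    intro A B h
    rwa [symmDiff_comm] at h
  loopless := by
    constructor
    intro A h
    simp [symmDiff_self] at h

/-- A set system is well-graded if the Hamming distance between any two members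
equals their distance in the one-inclusion graph. -/
def WellGraded {α : Type*} [DecidableEq α] (F : Finset (Finset α)) : Prop :=
  ∀ A B : {A : Finset α // A ∈ F},
    (oneInclusion F).dist A B = (symmDiff A.1 B.1).card

lemma key {α : Type*} [DecidableEq α] (F : Finset (Finset α)) (hWG : WellGraded F) (a : α) :
    ∀ n (A B : {A : Finset α // A ∈ F}), (symmDiff A.1 B.1).card = n → a ∈ B.1 → a ∉ A.1 →
    ∃ C ∈ F, a ∉ C ∧ insert a C ∈ F ∧ symmDiff A.1 C ⊆ (symmDiff A.1 B.1).erase a := by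
  intro n
  induction n using Nat.strong_induction_on with
  | _ n ih =>
    intro A B hcard haB haA
    have haAB : a ∈ symmDiff A.1 B.1 := by
      rw [Finset.mem_symmDiff]; right; exact ⟨haB, haA⟩
    have hd : (oneInclusion F).dist A B = n := by rw [hWG A B, hcard]
    have hn0 : n ≠ 0 := by
      intro h; subst h
      rw [Finset.card_eq_zero] at hcard
      rw [hcard] at haAB; simp at haAB
    obtain ⟨p, hp⟩ := SimpleGraph.exists_walk_of_dist_ne_zero
      (by omega : (oneInclusion F).dist A B ≠ 0)
    rw [hd] at hp
    cases p with
    | nil => simp at hp; omega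
    | cons hadj q =>
      rename_i A'
      obtain ⟨x, hx⟩ := Finset.card_eq_one.mp hadj
      have hqlen : q.length = n - 1 := by
        simp only [SimpleGraph.Walk.length_cons] at hp; omega
      have hA' : A'.1 = symmDiff A.1 {x} := by
        rw [← hx]; exact (symmDiff_symmDiff_cancel_left _ _).symm
      have hmemA' : ∀ y, y ∈ A'.1 ↔ (y ∈ A.1 ∧ y ≠ x) ∨ (y ∉ A.1 ∧ y = x) := by
        intro y
        rw [hA', Finset.mem_symmDiff, Finset.mem_singleton]
        tauto
      have hmemA'B : ∀ y, y ∈ symmDiff A'.1 B.1 ↔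
          (y ∈ symmDiff A.1 B.1 ∧ y ≠ x) ∨ (y ∉ symmDiff A.1 B.1 ∧ y = x) := by
        intro y
        rw [Finset.mem_symmDiff, hmemA' y, Finset.mem_symmDiff]
        by_cases hyx : y = x <;> simp [hyx] <;> tauto
      have hdistA'B : (oneInclusion F).dist A' B ≤ n - 1 := hqlen ▸ SimpleGraph.dist_le q
      have hxAB : x ∈ symmDiff A.1 B.1 := by
        by_contra hxn
        have heq : symmDiff A'.1 B.1 = insert x (symmDiff A.1 B.1) := by
          ext y
          rw [hmemA'B y, Finset.mem_insert]
          by_cases hyx : y = x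
          · subst hyx; tauto
          · tauto
        have : (symmDiff A'.1 B.1).card = n + 1 := by
          rw [heq, Finset.card_insert_of_notMem hxn, hcard]
        have := hWG A' B
        omega
      have heq : symmDiff A'.1 B.1 = (symmDiff A.1 B.1).erase x := by
        ext y
        rw [hmemA'B y, Finset.mem_erase]
        by_cases hyx : y = x
        · subst hyx; tauto
        · tauto
      by_cases hxa : x = a
      · subst hxa
        refine ⟨A.1, A.2, haA, ?_, ?_⟩
        · have : insert x A.1 = A'.1 := by
            ext y
            rw [hmemA' y, Finset.mem_insert]
            by_cases hyx : y = x
            · subst hyx; tauto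
            · tauto
          rw [this]; exact A'.2
        · rw [symmDiff_self]; intro y hy; simp at hy
      · have haA' : a ∉ A'.1 := by
          rw [hmemA' a]
          rintro (⟨h, -⟩ | ⟨-, h⟩)
          · exact haA h
          · exact hxa h.symm
        have hcard' : (symmDiff A'.1 B.1).card = n - 1 := by
          rw [heq, Finset.card_erase_of_mem hxAB, hcard]
        obtain ⟨C, hCF, haC, hins, hsub⟩ := ih (n - 1) (by omega) A' B hcard' haB haA'
        refine ⟨C, hCF, haC, hins, ?_⟩
        intro y hy
        rw [Finset.mem_symmDiff] at hy
        rw [Finset.mem_erase, Finset.mem_symmDiff]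
        have htri : y ∈ symmDiff A.1 A'.1 ∨ y ∈ symmDiff A'.1 C := by
          rw [Finset.mem_symmDiff, Finset.mem_symmDiff]
          tauto
        rcases htri with h | h
        · rw [hx, Finset.mem_singleton] at h
          subst h
          rw [Finset.mem_symmDiff] at hxAB
          exact ⟨hxa, hxAB⟩
        · have := hsub h
          rw [Finset.mem_erase, heq, Finset.mem_erase, Finset.mem_symmDiff] at this
          exact ⟨this.1, this.2.2⟩

/-- If `(X, F)` is well-graded and `D` is shattered by `F`, then every `a ∈ D`
appears as the label of at least `2 ^ (|D| - 1)` edges of the one-inclusion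
graph; the edges labelled `a` correspond to members `A ∈ F` with `a ∉ A` and
`A ∪ {a} ∈ F`. -/
theorem wellGraded_label_count {α : Type*} [DecidableEq α]
    (F : Finset (Finset α)) (hF : F.Nonempty) (hWG : WellGraded F)
    (D : Finset α) (hD : F.Shatters D) :
    ∀ a ∈ D, 2 ^ (D.card - 1) ≤ (F.filter (fun A => a ∉ A ∧ insert a A ∈ F)).card := by
  intro a ha
  -- for each S ⊆ D.erase a, produce C with C ∩ D.erase a = S
  have hmain : ∀ S ∈ (D.erase a).powerset,
      ∃ C ∈ F.filter (fun A => a ∉ A ∧ insert a A ∈ F), C ∩ D.erase a = S := by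
    intro S hS
    rw [Finset.mem_powerset] at hS
    have hSD : S ⊆ D := hS.trans (Finset.erase_subset _ _)
    obtain ⟨A, hAF, hA⟩ := hD hSD
    obtain ⟨B, hBF, hB⟩ := hD (Finset.insert_subset ha hSD)
    have haA : a ∉ A := by
      intro h
      have : a ∈ D ∩ A := Finset.mem_inter.mpr ⟨ha, h⟩
      rw [hA] at this
      exact (Finset.notMem_erase a D) (hS this)
    have haB : a ∈ B := by
      have : a ∈ D ∩ B := hB ▸ Finset.mem_insert_self a S
      exact (Finset.mem_inter.mp this).2
    obtain ⟨C, hCF, haC, hins, hsub⟩ :=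
      key F hWG a (symmDiff (⟨A, hAF⟩ : {A // A ∈ F}).1 (⟨B, hBF⟩ : {A // A ∈ F}).1).card
        ⟨A, hAF⟩ ⟨B, hBF⟩ rfl haB haA
    refine ⟨C, Finset.mem_filter.mpr ⟨hCF, haC, hins⟩, ?_⟩
    -- show C ∩ D.erase a = S
    have hDAB : ∀ d ∈ D, d ≠ a → (d ∈ A ↔ d ∈ B) := by
      intro d hd hda
      constructor
      · intro hdA
        have : d ∈ D ∩ A := Finset.mem_inter.mpr ⟨hd, hdA⟩
        rw [hA] at this
        have : d ∈ D ∩ B := by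
          rw [hB]; exact Finset.mem_insert_of_mem this
        exact (Finset.mem_inter.mp this).2
      · intro hdB
        have : d ∈ D ∩ B := Finset.mem_inter.mpr ⟨hd, hdB⟩
        rw [hB, Finset.mem_insert] at this
        rcases this with h | h
        · exact absurd h hda
        · have : d ∈ D ∩ A := by rw [hA]; exact h
          exact (Finset.mem_inter.mp this).2
    ext d
    rw [Finset.mem_inter, Finset.mem_erase]
    constructor
    · rintro ⟨hdC, hda, hdD⟩
      have hdAC : d ∉ symmDiff A C := by
        intro h
        have := hsub h
        rw [Finset.mem_erase, Finset.mem_symmDiff] at this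
        have := (hDAB d hdD hda)
        tauto
      rw [Finset.mem_symmDiff] at hdAC
      have hdA : d ∈ A := by tauto
      have : d ∈ D ∩ A := Finset.mem_inter.mpr ⟨hdD, hdA⟩
      rwa [hA] at this
    · intro hdS
      have hdD : d ∈ D := hSD hdS
      have hda : d ≠ a := by
        intro h; subst h; exact (Finset.notMem_erase d D) (hS hdS)
      have hdA : d ∈ A := by
        have : d ∈ D ∩ A := hA ▸ hdS
        exact (Finset.mem_inter.mp this).2
      have hdC : d ∈ C := by
        by_contra hdC
        have : d ∈ symmDiff A C := Finset.mem_symmDiff.mpr (Or.inl ⟨hdA, hdC⟩)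
        have := hsub this
        rw [Finset.mem_erase, Finset.mem_symmDiff] at this
        have := hDAB d hdD hda
        tauto
      exact ⟨hdC, hda, hdD⟩
  have hsubset : (D.erase a).powerset ⊆
      (F.filter (fun A => a ∉ A ∧ insert a A ∈ F)).image (fun C => C ∩ D.erase a) := by
    intro S hS
    obtain ⟨C, hC, hCeq⟩ := hmain S hS
    exact Finset.mem_image.mpr ⟨C, hC, hCeq⟩
  calc 2 ^ (D.card - 1) = (D.erase a).powerset.card := by
        rw [Finset.card_powerset, Finset.card_erase_of_mem ha]
    _ ≤ _ := Finset.card_le_card hsubset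
    _ ≤ _ := Finset.card_image_le
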